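/- Let n, m \geq 1 and let p_1 < \cdots < p_m be integers in [1,2n] with p_i + p_j \neq 2n+1 for all i, j, and suppose q_1 + p_m \geq 2n+1 where q_1 < \cdots < q_m are integers in [1,2n] with q_i \leq p_i for all i and q_i + q_j \neq 2n+1 for all i,j. Then \#\{ i \in [1, m-1] : q_i + q_m < 2n+1 < p_i + p_m \} \leq p_m - q_m. -/

import Mathlib

theorem stmt16 (n m : ℕ) (hn : 1 ≤ n) (hm : 1 ≤ m) (p q : Fin m → ℤ)
    (hp : StrictMono p) (hq : StrictMono q)
    (hpmem : ∀ i, 1 ≤ p i ∧ p i ≤ 2 * n) (hqmem : ∀ i, 1 ≤ q i ∧ q i ≤ 2 * n)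
    (hle : ∀ i, q i ≤ p i)
    (hpsum : ∀ i j, p i + p j ≠ 2 * n + 1)
    (hqsum : ∀ i j, q i + q j ≠ 2 * n + 1)
    (hqp : (2 * n + 1 : ℤ) ≤ q ⟨0, hm⟩ + p ⟨m - 1, by omega⟩) :
    ((Finset.univ.filter (fun i : Fin m =>
        i ≠ ⟨m - 1, by omega⟩ ∧
        q i + q ⟨m - 1, by omega⟩ < 2 * n + 1 ∧
        (2 * n + 1 : ℤ) < p i + p ⟨m - 1, by omega⟩)).card : ℤ)
      ≤ p ⟨m - 1, by omega⟩ - q ⟨m - 1, by omega⟩ := by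
  set M : Fin m := ⟨m - 1, by omega⟩ with hM
  have hq0 : ∀ i : Fin m, q ⟨0, hm⟩ ≤ q i := fun i =>
    hq.monotone (Fin.mk_le_mk.mpr (Nat.zero_le _))
  have hcard : (Finset.univ.filter (fun i : Fin m =>
        i ≠ M ∧ q i + q M < 2 * n + 1 ∧ (2 * n + 1 : ℤ) < p i + p M)).card
      ≤ (Finset.Icc ((2*n : ℤ) + 1 - p M) ((2*n : ℤ) - q M)).card := by
    apply Finset.card_le_card_of_injOn q
    · intro i hi
      simp only [Finset.mem_coe, Finset.mem_filter, Finset.mem_univ, true_and] at hi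
      have h1 := hq0 i
      have h2 := hi.2.1
      simp only [Finset.mem_coe, Finset.mem_Icc]
      constructor <;> omega
    · intro i _ j _ h
      exact hq.injective h
  have hicc : (Finset.Icc ((2*n : ℤ) + 1 - p M) ((2*n : ℤ) - q M)).card
      = ((2*n : ℤ) - q M + 1 - ((2*n : ℤ) + 1 - p M)).toNat := Int.card_Icc _ _
  have hnn : (0:ℤ) ≤ p M - q M := by have := hle M; omega
  have : (((2*n : ℤ) - q M + 1 - ((2*n : ℤ) + 1 - p M)).toNat : ℤ) = p M - q M := by
    omega
  calc ((Finset.univ.filter (fun i : Fin m =>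
        i ≠ M ∧ q i + q M < 2 * n + 1 ∧ (2 * n + 1 : ℤ) < p i + p M)).card : ℤ)
      ≤ ((Finset.Icc ((2*n : ℤ) + 1 - p M) ((2*n : ℤ) - q M)).card : ℤ) := by exact_mod_cast hcard
    _ = p M - q M := by rw [hicc]; exact this
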